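/- arXiv:1703.00931 — 5 statements merged into one kernel-verified Lean document; each statement's English description precedes it below -/
import Mathlib

section
/- Let B > 0 and 0 < ξ < 1/B be reals, let S be a submartingale with |ΔS(s)(x)| ≤ B for all situations s and x ∈ {0,1}, and let σ : {0,1}* → {0,1} be a selection process. Define P(x₁…xₙ) := ∏_{k=0}^{n−1} [1 − ξ·σ(x₁…x_k)·ΔS(x₁…x_k)(x_{k+1})]. Then P is a positive supermartingale with P(□) = 1, i.e. a test supermartingale. -/
/-- Expectation of a gamble `f : Bool → ℝ` under a precise forecast `p`. -/
noncomputable def pexp (p : ℝ) (f : Bool → ℝ) : ℝ := p * f true + (1 - p) * f false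

/-- Lower expectation associated with the interval forecast `[a, b]`. -/
noncomputable def lexp (a b : ℝ) (f : Bool → ℝ) : ℝ :=
  sInf ((fun p => pexp p f) '' Set.Icc a b)

/-- Upper expectation associated with the interval forecast `[a, b]`. -/
noncomputable def uexp (a b : ℝ) (f : Bool → ℝ) : ℝ :=
  sSup ((fun p => pexp p f) '' Set.Icc a b)

/-- Let `B > 0` and `0 < ξ < 1/B`, let `S` be a submartingale for the forecasting
system `Γ` (with bounds `lo ≤ hi`) whose differences are uniformly bounded by `B`,
and let `σ` be a selection process (with values in `{0,1}`). Then the process `P`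
determined by `P(□) = 1` and `P(sx) = P(s)·(1 − ξ·σ(s)·ΔS(s)(x))` is a positive
supermartingale with `P(□) = 1`, i.e. a test supermartingale for `Γ`. -/
theorem stmt7 (B ξ : ℝ) (hB : 0 < B) (hξ0 : 0 < ξ) (hξB : ξ < 1 / B)
    (lo hi : List Bool → ℝ)
    (hΓ : ∀ s, 0 ≤ lo s ∧ lo s ≤ hi s ∧ hi s ≤ 1)
    (S : List Bool → ℝ)
    (hsub : ∀ s, 0 ≤ lexp (lo s) (hi s) (fun x => S (s ++ [x]) - S s))
    (hSB : ∀ s x, |S (s ++ [x]) - S s| ≤ B)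
    (σ : List Bool → ℝ) (hσ : ∀ s, σ s = 0 ∨ σ s = 1)
    (P : List Bool → ℝ)
    (hP0 : P [] = 1)
    (hPrec : ∀ s x, P (s ++ [x]) = P s * (1 - ξ * σ s * (S (s ++ [x]) - S s))) :
    (∀ s, 0 < P s) ∧ P [] = 1 ∧
      ∀ s, uexp (lo s) (hi s) (fun x => P (s ++ [x]) - P s) ≤ 0 := by
  have hfac : ∀ s x, 0 < 1 - ξ * σ s * (S (s ++ [x]) - S s) := by
    intro s x
    have hξB' : ξ * B < 1 := (lt_div_iff₀ hB).mp hξB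
    have h1 : |ξ * σ s * (S (s ++ [x]) - S s)| < 1 := by
      rcases hσ s with h | h
      · simp [h, abs_lt]
      · rw [h, mul_one, abs_mul, abs_of_pos hξ0]
        calc ξ * |S (s ++ [x]) - S s| ≤ ξ * B :=
              mul_le_mul_of_nonneg_left (hSB s x) hξ0.le
          _ < 1 := hξB'
    have := (abs_lt.mp h1).2
    linarith
  have hPpos : ∀ s, 0 < P s := by
    intro s
    induction s using List.reverseRecOn with
    | nil => simp [hP0]
    | append_singleton t x ih =>
      rw [hPrec t x]
      exact mul_pos ih (hfac t x)
  refine ⟨hPpos, hP0, fun s => ?_⟩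
  obtain ⟨hlo, hlohi, hhi⟩ := hΓ s
  have hne : (Set.Icc (lo s) (hi s)).Nonempty := Set.nonempty_Icc.mpr hlohi
  -- bounded below for lexp
  have hcont : ∀ f : Bool → ℝ, Continuous fun p => pexp p f := by
    intro f; unfold pexp; continuity
  have hbdd : ∀ f : Bool → ℝ, BddBelow ((fun p => pexp p f) '' Set.Icc (lo s) (hi s)) :=
    fun f => (isCompact_Icc.image (hcont f)).bddBelow
  apply Real.sSup_le
  · rintro y ⟨p, hp, rfl⟩
    have hSexp : 0 ≤ pexp p (fun x => S (s ++ [x]) - S s) := by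
      have h1 : lexp (lo s) (hi s) (fun x => S (s ++ [x]) - S s)
          ≤ pexp p (fun x => S (s ++ [x]) - S s) :=
        csInf_le (hbdd (fun x => S (s ++ [x]) - S s))
          (Set.mem_image_of_mem _ hp)
      exact le_trans (hsub s) h1
    have hσnn : 0 ≤ σ s := by rcases hσ s with h | h <;> simp [h]
    have key : pexp p (fun x => P (s ++ [x]) - P s)
        = -(ξ * σ s * P s) * pexp p (fun x => S (s ++ [x]) - S s) := by
      simp only [pexp, hPrec]
      ring
    show pexp p (fun x => P (s ++ [x]) - P s) ≤ 0
    rw [key]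
    apply mul_nonpos_of_nonpos_of_nonneg _ hSexp
    have : 0 ≤ ξ * σ s * P s :=
      mul_nonneg (mul_nonneg hξ0.le hσnn) (hPpos s).le
    linarith
  · exact le_refl 0
end

section
/- Let B > 0, 0 < ε < B, ξ := ε/(2B²), let S be a real process with S(□)=0 and |ΔS(s)(x)| ≤ B for all s, x, and let σ : {0,1}* → {0,1}. Define P(x₁…xₙ) := ∏_{k=0}^{n−1}[1 − ξ σ(x₁…x_k) ΔS(x₁…x_k)(x_{k+1})]. If the σ-weighted average A(x₁…xₙ) := (∑_{k=0}^{n−1} σ(x₁…x_k) ΔS(x₁…x_k)(x_{k+1})) / (∑_{k=0}^{n−1} σ(x₁…x_k)) satisfies A(x₁…xₙ) ≤ −ε (with positive denominator), then P(x₁…xₙ) ≥ exp( (ε²/(4B²)) · ∑_{k=0}^{n−1} σ(x₁…x_k) ). -/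
/-- Key analytic inequality: `exp (t - t²) ≤ 1 + t` for `t ≥ -1/2`. -/
lemma exp_sub_sq_le (t : ℝ) (ht : -(1/2) ≤ t) : Real.exp (t - t ^ 2) ≤ 1 + t := by
  have h1 : (0:ℝ) < 1 + t := by linarith
  have key : 1 / (1 + t) ≤ Real.exp (t ^ 2 - t) := by
    rcases le_or_gt t 0 with h | h
    · have hx : 0 ≤ t ^ 2 - t := by nlinarith
      have := Real.quadratic_le_exp_of_nonneg hx
      have hpoly : 1 / (1 + t) ≤ 1 + (t ^ 2 - t) + (t ^ 2 - t) ^ 2 / 2 := by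
        rw [div_le_iff₀ h1]
        nlinarith [sq_nonneg t, sq_nonneg (1 + t)]
      linarith
    · have := Real.add_one_le_exp (t ^ 2 - t)
      have hpoly : 1 / (1 + t) ≤ t ^ 2 - t + 1 := by
        rw [div_le_iff₀ h1]
        nlinarith [sq_nonneg t]
      linarith
  have heq : Real.exp (t - t ^ 2) = (Real.exp (t ^ 2 - t))⁻¹ := by
    rw [← Real.exp_neg]; ring_nf
  rw [heq, inv_le_comm₀ (Real.exp_pos _) h1]
  calc (1 + t)⁻¹ = 1 / (1 + t) := (one_div _).symm
    _ ≤ Real.exp (t ^ 2 - t) := key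

/-- Let `B > 0`, `0 < ε < B`, `ξ := ε/(2B²)`, let `S` be a real process on binary strings
with `S(□) = 0` and differences bounded by `B`, and let `σ` be a `{0,1}`-valued selection
process. If along a situation `s = x₁…xₙ` the `σ`-weighted average of the differences of
`S` is at most `−ε` (with positive denominator), then the product process
`P(s) = ∏_{k<n} (1 − ξ·σ(x₁…x_k)·ΔS(x₁…x_k)(x_{k+1}))` satisfies
`P(s) ≥ exp((ε²/(4B²))·∑_{k<n} σ(x₁…x_k))`. -/
theorem stmt8 (B ε : ℝ) (hB : 0 < B) (hε0 : 0 < ε) (hεB : ε < B)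
    (S : List Bool → ℝ) (hS0 : S [] = 0)
    (hSB : ∀ s x, |S (s ++ [x]) - S s| ≤ B)
    (σ : List Bool → ℝ) (hσ : ∀ s, σ s = 0 ∨ σ s = 1)
    (s : List Bool)
    (hden : 0 < ∑ k ∈ Finset.range s.length, σ (s.take k))
    (hA : (∑ k ∈ Finset.range s.length,
            σ (s.take k) * (S (s.take (k + 1)) - S (s.take k))) /
          (∑ k ∈ Finset.range s.length, σ (s.take k)) ≤ -ε) :
    Real.exp (ε ^ 2 / (4 * B ^ 2) * ∑ k ∈ Finset.range s.length, σ (s.take k)) ≤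
      ∏ k ∈ Finset.range s.length,
        (1 - ε / (2 * B ^ 2) * σ (s.take k) * (S (s.take (k + 1)) - S (s.take k))) := by
  set ξ : ℝ := ε / (2 * B ^ 2) with hξ
  have hξ0 : 0 < ξ := by positivity
  have hξB : ξ * B < 1 / 2 := by
    rw [hξ, div_mul_eq_mul_div, div_lt_div_iff₀ (by positivity) (by norm_num)]
    nlinarith
  -- difference bound along the situation
  have hΔ : ∀ k ∈ Finset.range s.length, |S (s.take (k+1)) - S (s.take k)| ≤ B := by
    intro k hk
    rw [Finset.mem_range] at hk
    have h : s.take (k+1) = s.take k ++ [s.get ⟨k, hk⟩] := by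
      rw [List.take_succ, List.getElem?_eq_getElem hk]
      rfl
    rw [h]
    exact hSB _ _
  -- pointwise bound
  have hpoint : ∀ k ∈ Finset.range s.length,
      Real.exp (-(ξ * σ (s.take k) * (S (s.take (k+1)) - S (s.take k)))
        - ξ ^ 2 * B ^ 2 * σ (s.take k))
      ≤ 1 - ξ * σ (s.take k) * (S (s.take (k+1)) - S (s.take k)) := by
    intro k hk
    have hΔB : |S (s.take (k+1)) - S (s.take k)| ≤ B := hΔ k hk
    set Δ : ℝ := S (s.take (k+1)) - S (s.take k) with hΔdef
    rcases hσ (s.take k) with h0 | h1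
    · rw [h0]
      norm_num
    · rw [h1]
      have habs : |ξ * Δ| ≤ ξ * B := by
        rw [abs_mul, abs_of_pos hξ0]
        exact mul_le_mul_of_nonneg_left hΔB hξ0.le
      have habs' := abs_le.mp habs
      have hmain := exp_sub_sq_le (-(ξ * Δ)) (by cases habs' with
        | intro hl hr => nlinarith)
      have hsq : (ξ * Δ) ^ 2 ≤ ξ ^ 2 * B ^ 2 := by
        nlinarith [sq_abs (ξ * Δ), abs_nonneg (ξ * Δ)]
      calc Real.exp (-(ξ * 1 * Δ) - ξ ^ 2 * B ^ 2 * 1)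
          ≤ Real.exp (-(ξ * Δ) - (-(ξ * Δ)) ^ 2) := by
            apply Real.exp_le_exp.mpr
            nlinarith
        _ ≤ 1 + -(ξ * Δ) := hmain
        _ = 1 - ξ * 1 * Δ := by ring
  -- product bound
  have hprod : Real.exp (∑ k ∈ Finset.range s.length,
      (-(ξ * σ (s.take k) * (S (s.take (k+1)) - S (s.take k)))
        - ξ ^ 2 * B ^ 2 * σ (s.take k)))
      ≤ ∏ k ∈ Finset.range s.length,
        (1 - ξ * σ (s.take k) * (S (s.take (k+1)) - S (s.take k))) := by
    rw [Real.exp_sum]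
    exact Finset.prod_le_prod (fun k _ => (Real.exp_pos _).le) hpoint
  refine le_trans (Real.exp_le_exp.mpr ?_) hprod
  have hsum : ∑ k ∈ Finset.range s.length,
      σ (s.take k) * (S (s.take (k+1)) - S (s.take k))
      ≤ -ε * ∑ k ∈ Finset.range s.length, σ (s.take k) :=
    (div_le_iff₀ hden).mp hA
  have hexpand : ∑ k ∈ Finset.range s.length,
      (-(ξ * σ (s.take k) * (S (s.take (k+1)) - S (s.take k)))
        - ξ ^ 2 * B ^ 2 * σ (s.take k))
      = -ξ * (∑ k ∈ Finset.range s.length,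
          σ (s.take k) * (S (s.take (k+1)) - S (s.take k)))
        - ξ ^ 2 * B ^ 2 * (∑ k ∈ Finset.range s.length, σ (s.take k)) := by
    rw [Finset.mul_sum, Finset.mul_sum, ← Finset.sum_sub_distrib]
    apply Finset.sum_congr rfl
    intro k _
    ring
  rw [hexpand]
  have hkey1 : ξ ^ 2 * B ^ 2 = ξ * ε / 2 := by
    rw [hξ]; field_simp
  have hkey2 : ε ^ 2 / (4 * B ^ 2) = ξ * ε / 2 := by
    rw [hξ]; field_simp; ring
  have hmul := mul_le_mul_of_nonneg_left hsum hξ0.le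
  rw [hkey1, hkey2]
  nlinarith [hmul]
end

section
/- Let pₙ := 1/2 + (−1)ⁿ δₙ with δₙ := e^{−1/(n+1)}√(e^{1/(n+1)} − 1), and define the multiplier values M(n)(x) := e^{1/(2(n+1))} √(2 qₙ(x)) and N(n)(x) := e^{1/(2(n+1))} / √(2 qₙ(x)) for x ∈ {0,1}, where qₙ(1) := pₙ, qₙ(0) := 1 − pₙ. Then for all n ≥ 1: (1/2)M(n)(1) + (1/2)M(n)(0) = 1 and pₙ N(n)(1) + (1 − pₙ) N(n)(0) = 1. -/
open Real

/-- With `pₙ = 1/2 + (−1)ⁿ δₙ`, `δₙ = e^{−1/(n+1)}√(e^{1/(n+1)} − 1)`, `qₙ(1) = pₙ`,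
`qₙ(0) = 1 − pₙ`, and the multiplier values `M(n)(x) = e^{1/(2(n+1))}√(2qₙ(x))`,
`N(n)(x) = e^{1/(2(n+1))}/√(2qₙ(x))`, we have, for all `n ≥ 1`:
`(1/2)M(n)(1) + (1/2)M(n)(0) = 1` and `pₙ N(n)(1) + (1−pₙ) N(n)(0) = 1`. -/
theorem stmt12 (n : ℕ) (hn : 1 ≤ n)
    (δ p : ℝ) (q : Bool → ℝ) (M N : Bool → ℝ)
    (hδ : δ = exp (-(1 / (n + 1 : ℝ))) * Real.sqrt (exp (1 / (n + 1 : ℝ)) - 1))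
    (hp : p = 1 / 2 + (-1 : ℝ) ^ n * δ)
    (hq1 : q true = p) (hq0 : q false = 1 - p)
    (hM : ∀ x, M x = exp (1 / (2 * (n + 1 : ℝ))) * Real.sqrt (2 * q x))
    (hN : ∀ x, N x = exp (1 / (2 * (n + 1 : ℝ))) / Real.sqrt (2 * q x)) :
    (1 / 2) * M true + (1 / 2) * M false = 1 ∧
    p * N true + (1 - p) * N false = 1 := by
  set c : ℝ := 1 / (n + 1 : ℝ) with hc
  have hn1 : (2 : ℝ) ≤ (n : ℝ) + 1 := by
    have : (1 : ℝ) ≤ (n : ℝ) := by exact_mod_cast hn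
    linarith
  have hcpos : 0 < c := by positivity
  have hcle : c ≤ 1 / 2 := by
    rw [hc, div_le_div_iff₀ (by linarith) (by norm_num)]
    linarith
  set u : ℝ := exp (-c) with hu
  have hue : u = exp (-c) := hu
  clear_value u c
  have hupos : 0 < u := by rw [hue]; exact exp_pos _
  have hexp_half_lt : exp (1 / 2) < 2 := by
    have h1 : exp (1 / 2) * exp (1 / 2) = exp 1 := by
      rw [← Real.exp_add]; norm_num
    nlinarith [Real.exp_one_lt_d9, Real.exp_pos (1 / 2 : ℝ)]
  have hu2 : 1 / 2 < u := by
    have h1 : exp (-(1 / 2 : ℝ)) ≤ u := by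
      rw [hue]; apply Real.exp_le_exp.mpr; linarith
    have h2 : exp (-(1 / 2 : ℝ)) = 1 / exp (1 / 2) := by
      rw [Real.exp_neg]; ring
    have h3 : (1 : ℝ) / 2 < 1 / exp (1 / 2) := by
      rw [div_lt_div_iff₀ (by norm_num) (exp_pos _)]
      linarith
    linarith
  have huec : u * exp c = 1 := by rw [hue, ← Real.exp_add]; simp
  have hec1 : (1 : ℝ) ≤ exp c := Real.one_le_exp hcpos.le
  have hδnn : 0 ≤ δ := by rw [hδ]; positivity
  have hδsq : δ ^ 2 = u - u ^ 2 := by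
    rw [hδ]
    rw [mul_pow, Real.sq_sqrt (by linarith)]
    nlinarith [huec]
  have hs : ((-1 : ℝ) ^ n) ^ 2 = 1 := by
    rw [← pow_mul, mul_comm, pow_mul]; norm_num
  have hpq : p * (1 - p) = (u - 1 / 2) ^ 2 := by
    rw [hp]; nlinarith [hδsq, hs]
  have hδlt : δ < 1 / 2 := by nlinarith
  have hp0 : 0 < p := by
    rcases neg_one_pow_eq_or ℝ n with h | h <;> rw [hp, h] <;> linarith
  have hp1 : p < 1 := by
    rcases neg_one_pow_eq_or ℝ n with h | h <;> rw [hp, h] <;> linarith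
  -- √p √(1-p) = u - 1/2
  have hsqpq : Real.sqrt p * Real.sqrt (1 - p) = u - 1 / 2 := by
    rw [← Real.sqrt_mul hp0.le, hpq, Real.sqrt_sq (by linarith)]
  -- key identity
  have hkey : Real.sqrt p + Real.sqrt (1 - p) = Real.sqrt 2 * exp (-(c / 2)) := by
    have hsq : (Real.sqrt p + Real.sqrt (1 - p)) ^ 2 = 2 * u := by
      have h1 : Real.sqrt p ^ 2 = p := Real.sq_sqrt hp0.le
      have h2 : Real.sqrt (1 - p) ^ 2 = 1 - p := Real.sq_sqrt (by linarith)
      calc (Real.sqrt p + Real.sqrt (1 - p)) ^ 2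
          = Real.sqrt p ^ 2 + 2 * (Real.sqrt p * Real.sqrt (1 - p)) + Real.sqrt (1 - p) ^ 2 := by
            ring
        _ = p + 2 * (u - 1 / 2) + (1 - p) := by rw [h1, h2, hsqpq]
        _ = 2 * u := by ring
    have h3 : Real.sqrt p + Real.sqrt (1 - p) = Real.sqrt (2 * u) := by
      rw [show 2 * u = (Real.sqrt p + Real.sqrt (1 - p)) ^ 2 from hsq.symm,
        Real.sqrt_sq (by positivity)]
    rw [h3, Real.sqrt_mul (by norm_num)]
    congr 1
    have : u = exp (-(c / 2)) ^ 2 := by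
      rw [sq, ← Real.exp_add, hue]; ring_nf
    rw [this, Real.sqrt_sq (exp_pos _).le]
  have hcc : 1 / (2 * ((n : ℝ) + 1)) = c / 2 := by
    rw [hc]; field_simp
  have hee : exp (c / 2) * exp (-(c / 2)) = 1 := by rw [← Real.exp_add]; simp
  have hsqrt2 : Real.sqrt 2 * Real.sqrt 2 = 2 := Real.mul_self_sqrt (by norm_num)
  have hsqrt2pos : (0 : ℝ) < Real.sqrt 2 := by positivity
  constructor
  · rw [hM true, hM false, hq1, hq0, hcc, Real.sqrt_mul (by norm_num) p,
      Real.sqrt_mul (by norm_num) (1 - p)]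
    have h1 : 1 / 2 * (exp (c / 2) * (Real.sqrt 2 * Real.sqrt p))
        + 1 / 2 * (exp (c / 2) * (Real.sqrt 2 * Real.sqrt (1 - p)))
        = 1 / 2 * exp (c / 2) * Real.sqrt 2 * (Real.sqrt p + Real.sqrt (1 - p)) := by ring
    rw [h1, hkey, show 1 / 2 * exp (c / 2) * Real.sqrt 2 * (Real.sqrt 2 * exp (-(c / 2)))
        = 1 / 2 * (Real.sqrt 2 * Real.sqrt 2) * (exp (c / 2) * exp (-(c / 2))) by ring,
      hsqrt2, hee]
    norm_num
  · rw [hN true, hN false, hq1, hq0, hcc]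
    have hp' : Real.sqrt p > 0 := Real.sqrt_pos.mpr hp0
    have hq' : Real.sqrt (1 - p) > 0 := Real.sqrt_pos.mpr (by linarith)
    have h2p : Real.sqrt (2 * p) = Real.sqrt 2 * Real.sqrt p := Real.sqrt_mul (by norm_num) p
    have h2q : Real.sqrt (2 * (1 - p)) = Real.sqrt 2 * Real.sqrt (1 - p) :=
      Real.sqrt_mul (by norm_num) (1 - p)
    have key2 : ∀ a : ℝ, 0 < a → a * (exp (c / 2) / (Real.sqrt 2 * Real.sqrt a))
        = Real.sqrt a * exp (c / 2) / Real.sqrt 2 := by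
      intro a ha
      have hsa : (0 : ℝ) < Real.sqrt a := Real.sqrt_pos.mpr ha
      rw [mul_div_assoc', div_eq_div_iff (by positivity) hsqrt2pos.ne']
      conv_lhs => rw [← Real.mul_self_sqrt ha.le]
      ring
    rw [h2p, h2q, key2 p hp0, key2 (1 - p) (by linarith)]
    rw [← add_div, ← add_mul, hkey,
      show Real.sqrt 2 * exp (-(c / 2)) * exp (c / 2)
        = Real.sqrt 2 * (exp (c / 2) * exp (-(c / 2))) by ring, hee, mul_one,
      div_self hsqrt2pos.ne']
end

section
/- Let K = I ∩ J be the nonempty intersection of two interval forecasts I = [p̲, p̄] and J = [q̲, q̄] with q̲ < p̲ ≤ q̄ < p̄ (so K = [p̲, q̄]). Let D be a multiplier process with Ē_K(D(s)) ≤ 1 for all situations s. Define D_I(s)(1) := min{D(s)(1), 1}, D_I(s)(0) := max{D(s)(0), 1} and D_J(s)(1) := max{D(s)(1), 1}, D_J(s)(0) := min{D(s)(0), 1}. Then Ē_I(D_I(s)) ≤ 1 and Ē_J(D_J(s)) ≤ 1 for every situation s, and D(s) = D_I(s)·D_J(s) pointwise. -/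
lemma pexp_le_uexp {a b p : ℝ} (f : Bool → ℝ) (hp : p ∈ Set.Icc a b) :
    pexp p f ≤ uexp a b f := by
  apply le_csSup
  · exact (isCompact_Icc.image (by continuity)).bddAbove
  · exact ⟨p, hp, rfl⟩

lemma uexp_le_one {a b : ℝ} (f : Bool → ℝ) (ha : pexp a f ≤ 1) (hb : pexp b f ≤ 1) :
    uexp a b f ≤ 1 := by
  unfold uexp
  apply Real.sSup_le _ zero_le_one
  rintro x ⟨p, ⟨hpa, hpb⟩, rfl⟩
  rcases le_total (f true) (f false) with h | h
  · calc pexp p f ≤ pexp a f := by unfold pexp; nlinarith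
    _ ≤ 1 := ha
  · calc pexp p f ≤ pexp b f := by unfold pexp; nlinarith
    _ ≤ 1 := hb

/-- Factorisation of a supermartingale multiplier for the intersection `K = I ∩ J` of
two overlapping interval forecasts `I = [p̲, p̄]` and `J = [q̲, q̄]` with
`q̲ < p̲ ≤ q̄ < p̄`, so `K = [p̲, q̄]`: if `Ē_K(D(s)) ≤ 1` for all situations `s`, then
setting `D_I(s)(1) = min{D(s)(1),1}`, `D_I(s)(0) = max{D(s)(0),1}` and
`D_J(s)(1) = max{D(s)(1),1}`, `D_J(s)(0) = min{D(s)(0),1}`, we get `Ē_I(D_I(s)) ≤ 1`,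
`Ē_J(D_J(s)) ≤ 1`, and `D(s) = D_I(s)·D_J(s)` pointwise. -/
theorem stmt14 (pl pu ql qu : ℝ)
    (h0 : 0 ≤ ql) (h1 : ql < pl) (h2 : pl ≤ qu) (h3 : qu < pu) (h4 : pu ≤ 1)
    (D : List Bool → Bool → ℝ)
    (hDpos : ∀ s x, 0 ≤ D s x)
    (hDK : ∀ s, uexp pl qu (D s) ≤ 1)
    (DI DJ : List Bool → Bool → ℝ)
    (hDI1 : ∀ s, DI s true = min (D s true) 1) (hDI0 : ∀ s, DI s false = max (D s false) 1)
    (hDJ1 : ∀ s, DJ s true = max (D s true) 1) (hDJ0 : ∀ s, DJ s false = min (D s false) 1) :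
    (∀ s, uexp pl pu (DI s) ≤ 1) ∧
    (∀ s, uexp ql qu (DJ s) ≤ 1) ∧
    (∀ s x, D s x = DI s x * DJ s x) := by
  have hKl : ∀ s, pexp pl (D s) ≤ 1 := fun s =>
    le_trans (pexp_le_uexp (D s) ⟨le_refl _, h2⟩) (hDK s)
  have hKu : ∀ s, pexp qu (D s) ≤ 1 := fun s =>
    le_trans (pexp_le_uexp (D s) ⟨h2, le_refl _⟩) (hDK s)
  refine ⟨?_, ?_, ?_⟩
  · intro s
    have hmin : min (D s true) 1 ≤ 1 := min_le_right _ _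
    have hmin' : min (D s true) 1 ≤ D s true := min_le_left _ _
    have hKl' := hKl s
    unfold pexp at hKl'
    apply uexp_le_one <;> unfold pexp <;> rw [hDI1, hDI0]
    · rcases le_total (D s false) 1 with h | h
      · rw [max_eq_right h]; nlinarith
      · rw [max_eq_left h]; nlinarith
    · rcases le_total (D s false) 1 with h | h
      · rw [max_eq_right h]; nlinarith
      · rw [max_eq_left h]
        have hmax : (1:ℝ) ≤ max (D s false) 1 := le_max_right _ _
        nlinarith
  · intro s
    have hmin : min (D s false) 1 ≤ 1 := min_le_right _ _
    have hmin' : min (D s false) 1 ≤ D s false := min_le_left _ _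
    have hKu' := hKu s
    unfold pexp at hKu'
    apply uexp_le_one <;> unfold pexp <;> rw [hDJ1, hDJ0]
    · rcases le_total (D s true) 1 with h | h
      · rw [max_eq_right h]; nlinarith
      · rw [max_eq_left h]; nlinarith
    · rcases le_total (D s true) 1 with h | h
      · rw [max_eq_right h]; nlinarith
      · rw [max_eq_left h]; nlinarith
  · intro s x
    cases x
    · rw [hDI0, hDJ0]
      rcases le_total (D s false) 1 with h | h
      · rw [max_eq_right h, min_eq_left h, one_mul]
      · rw [max_eq_left h, min_eq_right h, mul_one]
    · rw [hDI1, hDJ1]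
      rcases le_total (D s true) 1 with h | h
      · rw [min_eq_left h, max_eq_right h, mul_one]
      · rw [min_eq_right h, max_eq_left h, one_mul]
end

section
/- If ω is a computable infinite binary sequence containing infinitely many zeroes and infinitely many ones, then the only interval forecast I such that the stationary forecasting system Γ_I makes ω computably random is I = [0,1]. -/
/-- `M` is a supermartingale for the forecasting system with bounds `lo`, `hi`:
every difference `ΔM(s)` has non-positive upper expectation. -/
def IsSupermartingale (lo hi : List Bool → ℝ) (M : List Bool → ℝ) : Prop :=
  ∀ s, uexp (lo s) (hi s) (fun x => M (s ++ [x]) - M s) ≤ 0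

/-- A test supermartingale: a non-negative supermartingale with initial value 1. -/
def IsTestSupermartingale (lo hi : List Bool → ℝ) (M : List Bool → ℝ) : Prop :=
  M [] = 1 ∧ (∀ s, 0 ≤ M s) ∧ IsSupermartingale lo hi M

/-- A real process is computable if some computable net of rationals converges to it
with a computable modulus of convergence. -/
def ComputableProcess (F : List Bool → ℝ) : Prop :=
  ∃ (r : List Bool → ℕ → ℚ) (e : List Bool → ℕ → ℕ),
    Computable (fun p : List Bool × ℕ => r p.1 p.2) ∧
    Computable (fun p : List Bool × ℕ => e p.1 p.2) ∧
    ∀ s N n, e s N ≤ n → |(r s n : ℝ) - F s| ≤ (2 : ℝ) ^ (-(N : ℤ))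

/-- The initial segment `ω^n = (ω_1, …, ω_n)` of an infinite binary sequence. -/
def prefixOf (ω : ℕ → Bool) (n : ℕ) : List Bool := List.ofFn fun i : Fin n => ω i

/-- `ω` is computably random for the forecasting system with bounds `lo`, `hi` if every
computable test supermartingale remains bounded above on the initial segments of `ω`. -/
def ComputablyRandom (lo hi : List Bool → ℝ) (ω : ℕ → Bool) : Prop :=
  ∀ T : List Bool → ℝ, IsTestSupermartingale lo hi T → ComputableProcess T →
    ∃ B : ℝ, ∀ n, T (prefixOf ω n) ≤ B


namespace Stmt16Aux

open Encodable




/-! ### gcd is primitive recursive -/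

private def gstep : ℕ × ℕ → ℕ × ℕ := fun p => if p.1 = 0 then p else (p.2 % p.1, p.1)

private lemma gstep_iter : ∀ a : ℕ, ∀ n b, a ≤ n → gstep^[n] (a, b) = (0, Nat.gcd a b) := by
  intro a
  induction a using Nat.strong_induction_on with
  | _ a IH =>
    intro n b han
    rcases Nat.eq_zero_or_pos a with rfl | ha
    · have : gstep (0, b) = (0, b) := by simp [gstep]
      simp [Function.iterate_fixed this, Nat.gcd_zero_left]
    · obtain ⟨n, rfl⟩ : ∃ n', n = n' + 1 := ⟨n - 1, by omega⟩
      rw [Function.iterate_succ_apply]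
      have h1 : gstep (a, b) = (b % a, a) := by simp [gstep, Nat.pos_iff_ne_zero.mp ha]
      have hlt : b % a < a := Nat.mod_lt b ha
      rw [h1, IH (b % a) hlt n a (by omega)]
      rw [Nat.gcd_rec a b]

lemma primrec_gcd : Primrec₂ Nat.gcd := by
  have h : Primrec gstep := by
    have : Primrec₂ fun (a b : ℕ) => (b % a, a) :=
      (Primrec.nat_mod.comp Primrec.snd Primrec.fst).pair Primrec.fst
    exact (Primrec.ite (Primrec.eq.comp Primrec.fst (Primrec.const 0)) Primrec.id
      (this.comp Primrec.fst Primrec.snd)).of_eq (fun p => by simp [gstep])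
  have h2 : Primrec fun p : ℕ × ℕ => (gstep^[p.1] p).2 :=
    Primrec.snd.comp (Primrec.nat_iterate Primrec.fst Primrec.id (h.comp Primrec.snd).to₂)
  exact (h2.of_eq fun p => by rw [gstep_iter p.1 p.1 p.2 le_rfl]).to₂

/-! ### Int encode facts -/

lemma encInt_ofNat (n : ℕ) : Encodable.encode ((n : ℤ)) = 2 * n := by
  show Equiv.intEquivNat (n : ℤ) = 2 * n
  rw [Equiv.intEquivNat, Equiv.trans_apply, Equiv.natSumNatEquivNat_apply]
  rfl

lemma encInt_negSucc (n : ℕ) : Encodable.encode (Int.negSucc n) = 2 * n + 1 := by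
  show Equiv.intEquivNat (Int.negSucc n) = 2 * n + 1
  rw [Equiv.intEquivNat, Equiv.trans_apply, Equiv.natSumNatEquivNat_apply]
  rfl

lemma natAbs_enc (z : ℤ) : (Encodable.encode z + 1) / 2 = z.natAbs := by
  cases z with
  | ofNat n => rw [Int.ofNat_eq_coe, encInt_ofNat]; simp; omega
  | negSucc n => rw [encInt_negSucc]; simp [Int.natAbs]; omega

lemma primrec_natAbs : Primrec Int.natAbs :=
  ((Primrec.nat_div.comp (Primrec.succ.comp Primrec.encode) (Primrec.const 2))).of_eq natAbs_enc

/-! ### A transparent copy of the classical encoding of ℚ -/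

private def QP : ℤ × ℕ → Prop := fun p => 0 < p.2 ∧ p.1.natAbs.Coprime p.2

private instance : DecidablePred QP := fun p => instDecidableAnd

private lemma primrecPred_QP : PrimrecPred QP := by
  have h1 : PrimrecPred fun p : ℤ × ℕ => 0 < p.2 :=
    Primrec.nat_lt.comp (Primrec.const 0) Primrec.snd
  have h2 : PrimrecPred fun p : ℤ × ℕ => p.1.natAbs.Coprime p.2 := by
    have : PrimrecPred fun p : ℤ × ℕ => Nat.gcd p.1.natAbs p.2 = 1 :=
      Primrec.eq.comp (primrec_gcd.comp (primrec_natAbs.comp Primrec.fst) Primrec.snd)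
        (Primrec.const 1)
    exact this.of_eq fun p => Iff.rfl
  exact h1.and h2

private def primQRep : Primcodable (Subtype QP) := Primcodable.subtype primrecPred_QP

private lemma encQRep (x : Subtype QP) :
    @Encodable.encode _ primQRep.toEncodable x = Nat.pair (Encodable.encode x.val.1) x.val.2 := rfl

lemma encOldQ (q : ℚ) : @Encodable.encode ℚ Rat.instEncodable q =
    Nat.pair (Encodable.encode q.num) q.den := rfl

private lemma range_eq :
    Set.range (@Encodable.encode _ primQRep.toEncodable) =
      Set.range (@Encodable.encode ℚ Rat.instEncodable) := by
  ext k
  constructor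
  · rintro ⟨⟨⟨z, d⟩, hd, hc⟩, rfl⟩
    exact ⟨⟨z, d, Nat.pos_iff_ne_zero.mp hd, hc⟩, by rw [encOldQ]; rfl⟩
  · rintro ⟨q, rfl⟩
    exact ⟨⟨(q.num, q.den), q.pos, q.reduced⟩, by rw [encOldQ]; rfl⟩

/-- The validity predicate for old codes. -/
private def V : ℕ → Bool := fun k =>
  @decide (k ∈ Set.range (@Encodable.encode ℚ Rat.instEncodable)) (Encodable.decidableRangeEncode ℚ k)

attribute [local instance] Encodable.decidableRangeEncode

private lemma primrec_V : Primrec V := by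
  have := @Primcodable.mem_range_encode (Subtype QP) primQRep
  haveI hdec : DecidablePred fun n => n ∈ Set.range (@Encodable.encode _ primQRep.toEncodable) :=
    @Encodable.decidableRangeEncode _ primQRep.toEncodable
  refine this.decide.of_eq fun k => ?_
  exact decide_eq_decide.mpr (by rw [range_eq])

/-- counting valid codes below c -/
private def cnt : ℕ → ℕ := fun c => (List.range c).countP V

private lemma foldl_cnt (p : ℕ → Bool) :
    ∀ (l : List ℕ) (acc : ℕ), l.foldl (fun acc x => if p x then acc + 1 else acc) acc
      = acc + l.countP p := by
  intro l
  induction l with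
  | nil => simp
  | cons x l ih =>
    intro acc
    by_cases h : p x <;> simp [List.countP_cons, h, ih] <;> omega

private lemma primrec_cnt : Primrec cnt := by
  have h : Primrec fun c : ℕ =>
      (List.range c).foldl (fun acc x => if V x then acc + 1 else acc) 0 := by
    have hc : PrimrecPred fun p : ℕ × (ℕ × ℕ) => V p.2.2 = true :=
      Primrec.eq.comp (primrec_V.comp (Primrec.snd.comp Primrec.snd)) (Primrec.const true)
    have h0 : Primrec₂ fun (_ : ℕ) (p : ℕ × ℕ) => if V p.2 = true then p.1 + 1 else p.1 :=
      (Primrec.ite hc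
        (Primrec.succ.comp (Primrec.fst.comp Primrec.snd))
        (Primrec.fst.comp Primrec.snd)).to₂
    exact (Primrec.list_foldl Primrec.list_range (Primrec.const 0) h0).of_eq fun c => by
      simp only []
    
  exact h.of_eq fun c => by rw [foldl_cnt, Nat.zero_add]; rfl

/-- The new (Primcodable) encoding of ℚ counts valid old codes. -/
lemma encodeQ_eq (q : ℚ) :
    @Encodable.encode ℚ (inferInstance : Primcodable ℚ).toEncodable q
      = cnt (@Encodable.encode ℚ Rat.instEncodable q) := rfl

/-- old code of a nonneg rational given as a fraction of naturals -/
private def E : ℕ → ℕ → ℕ := fun j d =>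
  Nat.pair (2 * (j / Nat.gcd j d)) (d / Nat.gcd j d)

private lemma num_den_div (j d : ℕ) (hd : 0 < d) :
    ((j : ℚ) / (d : ℚ)).num = ((j / Nat.gcd j d : ℕ) : ℤ) ∧
      ((j : ℚ) / (d : ℚ)).den = d / Nat.gcd j d := by
  have h1 : (j : ℚ) / (d : ℚ) = mkRat (j : ℤ) d := by
    rw [Rat.mkRat_eq_div]; push_cast; ring
  rw [h1, Rat.mkRat_def, dif_neg (Nat.pos_iff_ne_zero.mp hd), Rat.normalize_eq]
  constructor
  · simp [Int.natAbs_natCast, Int.natCast_ediv]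
  · simp [Int.natAbs_natCast]

private lemma encodeQ_div (j d : ℕ) (hd : 0 < d) :
    @Encodable.encode ℚ (inferInstance : Primcodable ℚ).toEncodable ((j : ℚ) / (d : ℚ))
      = cnt (E j d) := by
  rw [encodeQ_eq, encOldQ]
  obtain ⟨h1, h2⟩ := num_den_div j d hd
  rw [h1, h2, E, encInt_ofNat]

lemma computable_div_const (d : ℕ) (hd : 0 < d) :
    Computable (fun j : ℕ => ((j : ℚ) / (d : ℚ))) := by
  rw [← Computable.encode_iff]
  have hE : Primrec fun j => E j d := by
    have hg : Primrec fun j : ℕ => Nat.gcd j d := primrec_gcd.comp Primrec.id (Primrec.const d)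
    exact Primrec₂.natPair.comp
      (Primrec.nat_mul.comp (Primrec.const 2) (Primrec.nat_div.comp Primrec.id hg))
      (Primrec.nat_div.comp (Primrec.const d) hg)
  exact ((primrec_cnt.comp hE).of_eq fun j => (encodeQ_div j d hd).symm).to_comp





/-! ### The betting capital process -/

def step (t : Bool) (m : ℕ) (w x : Bool) (n : ℕ) : ℕ :=
  if w = t ∧ m ≤ n then (if x = t then n + 1 else n - m) else n

def capF (t : Bool) (m K : ℕ) (sw : List Bool × List Bool) : ℕ :=
  (List.range sw.1.length).foldl (fun n k => step t m (sw.2.getD k false) (sw.1.getD k false) n) (2 ^ K)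

def cap (t : Bool) (m K : ℕ) (ω : ℕ → Bool) (s : List Bool) : ℕ :=
  (List.range s.length).foldl (fun n k => step t m (ω k) (s.getD k false) n) (2 ^ K)

lemma foldl_congr' {ι : Type*} {l : List ι} {f g : ℕ → ι → ℕ} {i : ℕ}
    (h : ∀ x ∈ l, ∀ acc, f acc x = g acc x) : l.foldl f i = l.foldl g i := by
  induction l generalizing i with
  | nil => rfl
  | cons x l ih =>
    simp only [List.foldl_cons]
    rw [h x (by simp), ih fun y hy acc => h y (by simp [hy]) acc]

lemma prefixOf_length (ω : ℕ → Bool) (n : ℕ) : (prefixOf ω n).length = n := by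
  simp [prefixOf]

lemma prefixOf_zero (ω : ℕ → Bool) : prefixOf ω 0 = [] := by simp [prefixOf]

lemma prefixOf_succ (ω : ℕ → Bool) (n : ℕ) :
    prefixOf ω (n + 1) = prefixOf ω n ++ [ω n] := by
  rw [prefixOf, List.ofFn_succ']
  simp [prefixOf, List.concat_eq_append, Fin.coe_castSucc, Fin.val_last]

lemma prefixOf_getD (ω : ℕ → Bool) {k n : ℕ} (h : k < n) (d : Bool) :
    (prefixOf ω n).getD k d = ω k := by
  rw [List.getD_eq_getElem?_getD]
  simp [prefixOf, List.getElem?_ofFn, h]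

lemma capF_eq (t : Bool) (m K : ℕ) (ω : ℕ → Bool) (s : List Bool) :
    capF t m K (s, prefixOf ω s.length) = cap t m K ω s :=
  foldl_congr' fun k hk _ => by rw [prefixOf_getD ω (List.mem_range.mp hk)]

lemma cap_nil (t : Bool) (m K : ℕ) (ω : ℕ → Bool) : cap t m K ω [] = 2 ^ K := rfl

lemma cap_append (t : Bool) (m K : ℕ) (ω : ℕ → Bool) (s : List Bool) (x : Bool) :
    cap t m K ω (s ++ [x]) = step t m (ω s.length) x (cap t m K ω s) := by
  have hlen : (s ++ [x]).length = s.length + 1 := by simp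
  rw [cap, hlen, List.range_succ, List.foldl_append]
  have hin : (List.range s.length).foldl
      (fun n k => step t m (ω k) ((s ++ [x]).getD k false) n) (2 ^ K) = cap t m K ω s :=
    foldl_congr' fun k hk _ => by
      rw [List.getD_append _ _ _ _ (List.mem_range.mp hk)]
  rw [hin]
  have hx : (s ++ [x]).getD s.length false = x := by
    simp [List.getD_eq_getElem?_getD, List.getElem?_concat_length]
  simp [hx]

lemma cap_prefix (t : Bool) (m K : ℕ) (ω : ℕ → Bool) (hm : m ≤ 2 ^ K) (n : ℕ) :
    cap t m K ω (prefixOf ω n) = 2 ^ K + (List.range n).countP fun k => ω k == t := by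
  induction n with
  | zero => simp [prefixOf_zero, cap_nil]
  | succ n ih =>
    rw [prefixOf_succ, cap_append, prefixOf_length, ih, List.range_succ,
      List.countP_append, step]
    by_cases h : ω n = t
    · rw [if_pos ⟨h, by omega⟩, if_pos h]
      simp [h]
      omega
    · rw [if_neg (by tauto)]
      simp [h]

/-! ### Computability -/

lemma computable_prefixOf {ω : ℕ → Bool} (hω : Computable ω) : Computable (prefixOf ω) := by
  have h : Computable₂ fun (_ : ℕ) (p : ℕ × List Bool) => p.2 ++ [ω p.1] :=
    (Computable.list_concat.comp (Computable.snd.comp Computable.snd)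
      (hω.comp (Computable.fst.comp Computable.snd))).to₂
  have := Computable.nat_rec Computable.id (Computable.const ([] : List Bool)) h
  refine this.of_eq fun n => ?_
  induction n with
  | zero => simp [prefixOf_zero]
  | succ n ih => simp [prefixOf_succ, ← ih]

lemma primrec_capF (t : Bool) (m K : ℕ) : Primrec (capF t m K) := by
  have hstep : Primrec fun z : (List Bool × List Bool) × ℕ × ℕ =>
      step t m (z.1.2.getD z.2.2 false) (z.1.1.getD z.2.2 false) z.2.1 := by
    unfold step
    have hget2 : Primrec fun z : (List Bool × List Bool) × ℕ × ℕ => z.1.2.getD z.2.2 false :=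
      (Primrec.list_getD false).comp (Primrec.snd.comp Primrec.fst)
        (Primrec.snd.comp Primrec.snd)
    have hget1 : Primrec fun z : (List Bool × List Bool) × ℕ × ℕ => z.1.1.getD z.2.2 false :=
      (Primrec.list_getD false).comp (Primrec.fst.comp Primrec.fst)
        (Primrec.snd.comp Primrec.snd)
    have hn : Primrec fun z : (List Bool × List Bool) × ℕ × ℕ => z.2.1 :=
      Primrec.fst.comp Primrec.snd
    have hc1 : PrimrecPred fun z : (List Bool × List Bool) × ℕ × ℕ =>
        z.1.2.getD z.2.2 false = t ∧ m ≤ z.2.1 :=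
      PrimrecPred.and (Primrec.eq.comp hget2 (Primrec.const t))
        (Primrec.nat_le.comp (Primrec.const m) hn)
    have hc2 : PrimrecPred fun z : (List Bool × List Bool) × ℕ × ℕ =>
        z.1.1.getD z.2.2 false = t :=
      Primrec.eq.comp hget1 (Primrec.const t)
    exact Primrec.ite hc1
      (Primrec.ite hc2 (Primrec.succ.comp hn) (Primrec.nat_sub.comp hn (Primrec.const m)))
      hn
  have hf : Primrec fun sw : List Bool × List Bool => List.range sw.1.length :=
    Primrec.list_range.comp (Primrec.list_length.comp Primrec.fst)
  exact (Primrec.list_foldl hf (Primrec.const (2 ^ K)) hstep.to₂).of_eq fun sw => rfl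

lemma computable_cap (t : Bool) (m K : ℕ) {ω : ℕ → Bool} (hω : Computable ω) :
    Computable (cap t m K ω) := by
  have h : Computable fun s : List Bool => capF t m K (s, prefixOf ω s.length) :=
    (primrec_capF t m K).to_comp.comp
      (Computable.id.pair ((computable_prefixOf hω).comp Computable.list_length))
  exact h.of_eq fun s => capF_eq t m K ω s



lemma pexp_le_uexp {a b p : ℝ} (hp : p ∈ Set.Icc a b) (f : Bool → ℝ) :
    pexp p f ≤ uexp a b f := by
  have hcont : Continuous fun p : ℝ => pexp p f := by
    unfold pexp; continuity
  have hbdd : BddAbove ((fun p => pexp p f) '' Set.Icc a b) :=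
    ((isCompact_Icc).image hcont).bddAbove
  exact le_csSup hbdd ⟨p, hp, rfl⟩

lemma test_le_one (ω : ℕ → Bool) {T : List Bool → ℝ}
    (h : IsTestSupermartingale (fun _ => (0:ℝ)) (fun _ => (1:ℝ)) T) :
    ∀ n, T (prefixOf ω n) ≤ 1 := by
  obtain ⟨h1, hnn, hsm⟩ := h
  have hdec : ∀ s x, T (s ++ [x]) ≤ T s := by
    intro s x
    have hs := hsm s
    cases x
    · have h0' : pexp 0 (fun x => T (s ++ [x]) - T s) ≤ 0 :=
        le_trans (pexp_le_uexp ⟨le_rfl, zero_le_one⟩ _) hs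
      simp only [pexp] at h0'
      linarith
    · have h1' : pexp 1 (fun x => T (s ++ [x]) - T s) ≤ 0 :=
        le_trans (pexp_le_uexp ⟨zero_le_one, le_rfl⟩ _) hs
      simp only [pexp] at h1'
      linarith
  intro n
  induction n with
  | zero => simp [prefixOf_zero ω, h1]
  | succ n ih => exact le_trans (by rw [prefixOf_succ]; exact hdec _ _) ih

lemma notRandom {a b : ℝ} (ω : ℕ → Bool) (hω : Computable ω) (t : Bool) (m : ℕ)
    (hpm : ∀ p : ℝ, a ≤ p → p ≤ b → (if t then p else 1 - p) * (m + 1) ≤ m)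
    (hinf : ∀ n, ∃ k, n ≤ k ∧ ω k = t) :
    ¬ ComputablyRandom (fun _ => a) (fun _ => b) ω := by
  intro hR
  set K := m with hKdef
  have hm2K : m ≤ 2 ^ K := (Nat.lt_two_pow_self (n := m)).le
  have h2K : (0:ℝ) < (2 : ℝ) ^ K := by positivity
  set C : List Bool → ℕ := cap t m K ω with hC
  set T : List Bool → ℝ := fun s => (C s : ℝ) / (2 : ℝ) ^ K with hT
  -- supermartingale property
  have hsm : IsSupermartingale (fun _ => a) (fun _ => b) T := by
    intro s
    refine Real.sSup_le ?_ le_rfl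
    rintro x ⟨p, hp, rfl⟩
    show pexp p (fun x => T (s ++ [x]) - T s) ≤ 0
    have hct := cap_append t m K ω s true
    have hcf := cap_append t m K ω s false
    have key := hpm p hp.1 hp.2
    by_cases hbet : ω s.length = t ∧ m ≤ C s
    · obtain ⟨hw, hmn⟩ := hbet
      have hcast : ((C s - m : ℕ) : ℝ) = (C s : ℝ) - m := by
        rw [Nat.cast_sub hmn]
      cases t
      · -- t = false : pays on outcome false
        rw [step, if_pos ⟨hw, hmn⟩] at hct hcf
        simp only [Bool.true_eq_false, if_false, if_true, reduceIte] at hct hcf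
        have heq : pexp p (fun x => T (s ++ [x]) - T s)
            = ((1 - p) * (m + 1) - m) / (2:ℝ) ^ K := by
          simp only [pexp, hT, hC]
          rw [hct, hcf, hcast]
          push_cast
          field_simp
          ring
        rw [heq]
        apply div_nonpos_of_nonpos_of_nonneg _ (le_of_lt h2K)
        simp only [if_false, Bool.false_eq_true, reduceIte] at key
        linarith
      · -- t = true : pays on outcome true
        rw [step, if_pos ⟨hw, hmn⟩] at hct hcf
        simp only [Bool.false_eq_true, if_false, if_true, reduceIte] at hct hcf
        have heq : pexp p (fun x => T (s ++ [x]) - T s)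
            = (p * (m + 1) - m) / (2:ℝ) ^ K := by
          simp only [pexp, hT, hC]
          rw [hct, hcf, hcast]
          push_cast
          field_simp
          ring
        rw [heq]
        apply div_nonpos_of_nonpos_of_nonneg _ (le_of_lt h2K)
        simp only [if_true, reduceIte] at key
        linarith
    · rw [step, if_neg hbet] at hct hcf
      have heq : pexp p (fun x => T (s ++ [x]) - T s) = 0 := by
        simp only [pexp, hT, hC]
        rw [hct, hcf]
        ring
      rw [heq]
  have hTest : IsTestSupermartingale (fun _ => a) (fun _ => b) T := by
    refine ⟨?_, fun s => by positivity, hsm⟩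
    show ((cap t m K ω [] : ℕ) : ℝ) / (2:ℝ) ^ K = 1
    rw [cap_nil]
    push_cast
    field_simp
  have hProc : ComputableProcess T := by
    refine ⟨fun s _ => ((C s : ℚ) / ((2 ^ K : ℕ) : ℚ)), fun _ _ => 0, ?_, ?_, ?_⟩
    · exact (computable_div_const (2 ^ K) (Nat.two_pow_pos K)).comp
        ((computable_cap t m K hω).comp Computable.fst)
    · exact Computable.const 0
    · intro s N n _
      have hval : (((C s : ℚ) / ((2 ^ K : ℕ) : ℚ) : ℚ) : ℝ) = T s := by
        push_cast
        rfl
      rw [hval, sub_self, abs_zero]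
      positivity
  obtain ⟨B, hB⟩ := hR T hTest hProc
  -- the count of positions with ω k = t is unbounded
  have hcnt : ∀ c : ℕ, ∃ n, c ≤ (List.range n).countP fun k => ω k == t := by
    intro c
    induction c with
    | zero => exact ⟨0, Nat.zero_le _⟩
    | succ c ih =>
      obtain ⟨n, hn⟩ := ih
      obtain ⟨k, hk, hkt⟩ := hinf n
      refine ⟨k + 1, ?_⟩
      have hsub : (List.range n).Sublist (List.range k) :=
        (List.range_sublist).mpr hk
      have h1 : (List.range n).countP (fun k => ω k == t)
          ≤ (List.range k).countP (fun k => ω k == t) := hsub.countP_le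
      rw [List.range_succ, List.countP_append]
      simp [hkt]
      omega
  obtain ⟨j, hj⟩ := exists_nat_gt (B * (2:ℝ) ^ K)
  obtain ⟨n, hn⟩ := hcnt j
  have hcap := cap_prefix t m K ω hm2K n
  have hTn := hB n
  have : T (prefixOf ω n) = ((2 ^ K + (List.range n).countP fun k => ω k == t : ℕ) : ℝ)
      / (2:ℝ) ^ K := by
    simp only [hT, hC, hcap]
  rw [this, div_le_iff₀ h2K] at hTn
  push_cast at hTn
  have hjn : (j : ℝ) ≤ ((List.range n).countP fun k => ω k == t : ℕ) := by
    exact_mod_cast hn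
  nlinarith [pow_pos (by norm_num : (0:ℝ) < 2) K]


end Stmt16Aux

/-- If `ω` is a computable infinite binary sequence with infinitely many zeroes and
infinitely many ones, then the only interval forecast `I = [a,b] ⊆ [0,1]` whose
stationary forecasting system `Γ_I` makes `ω` computably random is `I = [0,1]`. -/
theorem stmt16 (ω : ℕ → Bool) (hcomp : Computable ω)
    (hones : ∀ n : ℕ, ∃ m : ℕ, n ≤ m ∧ ω m = true)
    (hzeroes : ∀ n : ℕ, ∃ m : ℕ, n ≤ m ∧ ω m = false)
    (a b : ℝ) (h0 : 0 ≤ a) (hab : a ≤ b) (h1 : b ≤ 1) :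
    ComputablyRandom (fun _ => a) (fun _ => b) ω ↔ (a = 0 ∧ b = 1) := by
  constructor
  · intro hR
    by_contra hne
    have hcases : 0 < a ∨ b < 1 := by
      by_cases ha : a = 0
      · right
        rcases lt_or_eq_of_le h1 with h | h
        · exact h
        · exact absurd ⟨ha, h⟩ hne
      · left
        exact lt_of_le_of_ne h0 (Ne.symm ha)
    rcases hcases with ha | hb
    · obtain ⟨m, hm⟩ := exists_nat_ge ((1 - a) / a)
      refine absurd hR (Stmt16Aux.notRandom ω hcomp false m ?_ hzeroes)
      intro p hpa hpb
      simp only [Bool.false_eq_true, if_false, reduceIte]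
      have h1a : 1 - a ≤ (m : ℝ) * a := by
        rw [div_le_iff₀ ha] at hm
        linarith
      nlinarith
    · obtain ⟨m, hm⟩ := exists_nat_ge (b / (1 - b))
      refine absurd hR (Stmt16Aux.notRandom ω hcomp true m ?_ hones)
      intro p hpa hpb
      simp only [if_true, reduceIte]
      have h1b : b ≤ (m : ℝ) * (1 - b) := by
        rw [div_le_iff₀ (by linarith)] at hm
        linarith
      nlinarith
  · rintro ⟨rfl, rfl⟩
    intro T hT _
    exact ⟨1, Stmt16Aux.test_le_one ω hT⟩
end
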